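/- For any rational p/q in lowest terms, the lexicographically minimal cyclic shift m of the period block of the Sturmian sequence of rotation number p/q is the reversal of the lexicographically maximal cyclic shift M; that is, if M = v₁v₂⋯v_q then m = v_q v_{q−1}⋯v₁. -/

import Mathlib

/-- The period block of the mechanical word of rotation number `p/q`, shifted by `k`. -/
noncomputable def sturmianBlock (p q k : ℕ) : List ℤ :=
  (List.range q).map fun n =>
    ⌊(((n + k + 1 : ℕ) : ℝ)) * p / q⌋ - ⌊(((n + k : ℕ) : ℝ)) * p / q⌋

/-- Lexicographic order on blocks. -/
def blockLE (l₁ l₂ : List ℤ) : Prop := List.Lex (· < ·) l₁ l₂ ∨ l₁ = l₂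


private def sr (p q m : ℕ) : ℕ := m * p % q

private def sE (p q m : ℕ) : ℤ := ((m + 1) * p / q : ℕ) - ((m * p / q : ℕ) : ℤ)

private lemma sr_lt (p : ℕ) {q : ℕ} (hq : 0 < q) (m : ℕ) : sr p q m < q :=
  Nat.mod_lt _ hq

private lemma sr_add (p q a b : ℕ) : sr p q (a + b) = (sr p q a + sr p q b) % q := by
  simp [sr, add_mul, Nat.add_mod]

private lemma sr_q (p q : ℕ) : sr p q q = 0 := by simp [sr, Nat.mul_mod_right]

private lemma sr_zero (p q : ℕ) : sr p q 0 = 0 := by simp [sr]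

private lemma sr_add_q (p : ℕ) {q : ℕ} (hq : 0 < q) (m : ℕ) : sr p q (m + q) = sr p q m := by
  rw [sr_add, sr_q, Nat.add_zero, Nat.mod_eq_of_lt (sr_lt p hq m)]

private lemma qE (p : ℕ) {q : ℕ} (hq : 0 < q) (m : ℕ) :
    (q : ℤ) * sE p q m = p + sr p q m - sr p q (m + 1) := by
  have h1 : (q : ℤ) * ((m + 1) * p / q : ℕ) + ((m + 1) * p % q : ℕ) = ((m + 1) * p : ℕ) := by
    exact_mod_cast Nat.div_add_mod ((m + 1) * p) q
  have h2 : (q : ℤ) * (m * p / q : ℕ) + (m * p % q : ℕ) = ((m * p : ℕ)) := by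
    exact_mod_cast Nat.div_add_mod (m * p) q
  simp only [sE, sr]
  push_cast at h1 h2 ⊢
  linear_combination h1 - h2

private lemma sE_eq (p : ℕ) {q : ℕ} (hq : 0 < q) {a b : ℕ}
    (h : (p : ℤ) + sr p q a - sr p q (a + 1) = p + sr p q b - sr p q (b + 1)) :
    sE p q a = sE p q b := by
  have hq' : (q : ℤ) ≠ 0 := by exact_mod_cast hq.ne'
  apply mul_left_cancel₀ hq'
  rw [qE p hq, qE p hq, h]

private lemma flr (p : ℕ) {q : ℕ} (hq : 0 < q) (m : ℕ) :
    ⌊((m : ℕ) : ℝ) * p / q⌋ = ((m * p / q : ℕ) : ℤ) := by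
  have h : ((m : ℕ) : ℝ) * p / q = ((m * p : ℕ) : ℝ) / ((q : ℕ) : ℝ) := by
    push_cast; ring
  rw [h, ← Int.natCast_floor_eq_floor (by positivity), Nat.floor_div_eq_div]

private lemma block_eq (p : ℕ) {q : ℕ} (hq : 0 < q) (k : ℕ) :
    sturmianBlock p q k = (List.range q).map fun n => sE p q (k + n) := by
  unfold sturmianBlock
  apply List.map_congr_left
  intro n _
  rw [flr p hq (n + k + 1), flr p hq (n + k)]
  have h1 : n + k + 1 = k + n + 1 := by omega
  have h2 : n + k = k + n := by omega
  rw [h1, h2]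
  rfl

private lemma lex_append (u : List ℤ) {x y : ℤ} (vs ws : List ℤ) (h : x < y) :
    List.Lex (· < ·) (u ++ x :: vs) (u ++ y :: ws) := by
  induction u with
  | nil => exact List.Lex.rel h
  | cons a t ih => exact List.Lex.cons ih

private lemma lex_map_range {q : ℕ} {f g : ℕ → ℤ} {i : ℕ} (hi : i < q)
    (heq : ∀ m < i, f m = g m) (hlt : f i < g i) :
    List.Lex (· < ·) ((List.range q).map f) ((List.range q).map g) := by
  obtain ⟨t, rfl⟩ : ∃ t, q = i + (t + 1) := ⟨q - i - 1, by omega⟩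
  rw [List.range_add, List.range_succ_eq_map]
  simp only [List.map_append, List.map_map, List.map_cons, Function.comp_def, Nat.add_zero]
  have hpre : (List.range i).map f = (List.range i).map g :=
    List.map_congr_left fun m hm => heq m (List.mem_range.mp hm)
  rw [hpre]
  exact lex_append _ _ _ hlt

private lemma dvd_mod_sub (q : ℕ) (a : ℤ) : (q : ℤ) ∣ a % q - a :=
  ⟨-(a / q), by rw [Int.emod_def]; ring⟩

private lemma block_lt (p : ℕ) {q : ℕ} (hq : 0 < q) {k k' : ℕ}
    (hk : k < q) (h : sr p q k' < sr p q k) :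
    List.Lex (· < ·) ((List.range q).map fun n => sE p q (k' + n))
      ((List.range q).map fun n => sE p q (k + n)) := by
  have hq0 : (0 : ℤ) < q := by exact_mod_cast hq
  set c : ℤ := (sr p q k : ℤ) - (sr p q k' : ℤ) with hc
  have hc0 : 0 < c := by simp only [hc, sub_pos]; exact_mod_cast h
  have hcq : c < q := by
    have := sr_lt p hq k
    omega
  have dich : ∀ j, ((sr p q (k + j) : ℤ) - sr p q (k' + j) = c) ∨
      ((sr p q (k + j) : ℤ) - sr p q (k' + j) = c - q) := by
    intro j
    have e1 : (q : ℤ) ∣ ((sr p q (k + j) : ℤ) - sr p q (k' + j)) - c := by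
      have a1 : sr p q (k + j) = (sr p q k + sr p q j) % q := sr_add p q k j
      have a2 : sr p q (k' + j) = (sr p q k' + sr p q j) % q := sr_add p q k' j
      rw [a1, a2, hc]
      push_cast [Int.natCast_mod]
      have d1 := dvd_mod_sub q ((sr p q k : ℤ) + sr p q j)
      have d2 := dvd_mod_sub q ((sr p q k' : ℤ) + sr p q j)
      have := dvd_sub d1 d2
      convert this using 1
      · rfl
      push_cast
      ring
    obtain ⟨e, he⟩ := e1
    have b1 : (sr p q (k + j) : ℤ) < q := by exact_mod_cast sr_lt p hq _
    have b2 : (0 : ℤ) ≤ sr p q (k' + j) := by positivity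
    have b3 : (sr p q (k' + j) : ℤ) < q := by exact_mod_cast sr_lt p hq _
    have b4 : (0 : ℤ) ≤ sr p q (k + j) := by positivity
    have he1 : e < 1 := by
      by_contra hcon
      push_neg at hcon
      nlinarith
    have he2 : -2 < e := by
      by_contra hcon
      push_neg at hcon
      nlinarith
    interval_cases e <;> omega
  have hk1 : 1 ≤ k := by
    rcases Nat.eq_zero_or_pos k with rfl | h1
    · have h0 := sr_zero p q
      omega
    · exact h1
  have hwit : (sr p q (k + (q - k)) : ℤ) - sr p q (k' + (q - k)) = c - q := by
    have hz : sr p q (k + (q - k)) = 0 := by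
      have hqq : k + (q - k) = q := by omega
      rw [hqq, sr_q]
    rcases dich (q - k) with hd | hd
    · exfalso
      rw [hz] at hd
      have := Nat.cast_nonneg (α := ℤ) (sr p q (k' + (q - k)))
      omega
    · exact hd
  classical
  have hP : ∃ j, (sr p q (k + j) : ℤ) - sr p q (k' + j) = c - q := ⟨q - k, hwit⟩
  set j0 := Nat.find hP with hj0def
  have hj0P : (sr p q (k + j0) : ℤ) - sr p q (k' + j0) = c - q := Nat.find_spec hP
  have hj0min : ∀ i < j0, (sr p q (k + i) : ℤ) - sr p q (k' + i) = c := by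
    intro i hi
    rcases dich i with hd | hd
    · exact hd
    · exact absurd hd (Nat.find_min hP hi)
  have hj0le : j0 ≤ q - k := Nat.find_le hwit
  have hj01 : 1 ≤ j0 := by
    rcases Nat.eq_zero_or_pos j0 with hz | h1
    · exfalso
      rw [hz] at hj0P
      have : (sr p q (k + 0) : ℤ) - sr p q (k' + 0) = c - q := hj0P
      have hc' : (sr p q k : ℤ) - sr p q k' = c - q := this
      omega
    · exact h1
  set i := j0 - 1 with hidef
  have hi_lt : i < q := by omega
  have heq : ∀ m < i, sE p q (k' + m) = sE p q (k + m) := by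
    intro m hm
    have d1 := hj0min m (by omega)
    have d2 : (sr p q (k + m + 1) : ℤ) - sr p q (k' + m + 1) = c := hj0min (m + 1) (by omega)
    apply sE_eq p hq
    omega
  have hlt : sE p q (k' + i) < sE p q (k + i) := by
    have d1 := hj0min i (by omega)
    have hj0i : j0 = i + 1 := by omega
    have d2 : (sr p q (k + i + 1) : ℤ) - sr p q (k' + i + 1) = c - q := by
      rw [hj0i] at hj0P
      exact hj0P
    have hq' : (q : ℤ) ≠ 0 := by exact_mod_cast hq.ne'
    have e3 : (q : ℤ) * sE p q (k + i) = (q : ℤ) * (sE p q (k' + i) + 1) := by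
      rw [mul_add, mul_one, qE p hq, qE p hq]
      omega
    have := mul_left_cancel₀ hq' e3
    omega
  exact lex_map_range hi_lt heq hlt

private lemma exists_sr_eq (p : ℕ) {q : ℕ} (hq : 0 < q) (hpq : Nat.Coprime p q) {t : ℕ}
    (ht : t < q) : ∃ k, k < q ∧ sr p q k = t := by
  haveI : NeZero q := ⟨hq.ne'⟩
  have hu : IsUnit (p : ZMod q) := (ZMod.isUnit_iff_coprime p q).mpr hpq
  refine ⟨((t : ZMod q) * (↑p)⁻¹).val, ZMod.val_lt _, ?_⟩
  have hcast : ((((t : ZMod q) * (↑p)⁻¹).val * p : ℕ) : ZMod q) = (t : ZMod q) := by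
    push_cast
    rw [ZMod.natCast_val, ZMod.cast_id, mul_assoc, ZMod.inv_mul_of_unit _ hu, mul_one]
  have h2 : sr p q (((t : ZMod q) * (↑p)⁻¹).val)
      = ((((t : ZMod q) * (↑p)⁻¹).val * p : ℕ) : ZMod q).val := (ZMod.val_natCast q _).symm
  rw [h2, hcast, ZMod.val_cast_of_lt ht]

private lemma sr_inj (p : ℕ) {q : ℕ} (hq : 0 < q) (hpq : Nat.Coprime p q) {a b : ℕ}
    (ha : a < q) (hb : b < q) (h : sr p q a = sr p q b) : a = b := by
  haveI : NeZero q := ⟨hq.ne'⟩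
  have hu : IsUnit (p : ZMod q) := (ZMod.isUnit_iff_coprime p q).mpr hpq
  have h1 : ((a * p : ℕ) : ZMod q) = ((b * p : ℕ) : ZMod q) := by
    rw [ZMod.natCast_eq_natCast_iff']
    simpa [ZMod.val_natCast, sr] using h
  push_cast at h1
  have h2 : (a : ZMod q) = (b : ZMod q) := hu.mul_right_cancel h1
  have h3 : a % q = b % q := (ZMod.natCast_eq_natCast_iff' a b q).mp h2
  rw [Nat.mod_eq_of_lt ha, Nat.mod_eq_of_lt hb] at h3
  exact h3

private lemma srL (p : ℕ) {q kM : ℕ} (hq : 0 < q) (hr : sr p q kM = q - 1) {j : ℕ}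
    (hj : j < q) : sr p q (kM + (q - 1 - j)) = q - 1 - sr p q (j + 1) := by
  have h1 : sr p q (kM + (q - 1 - j)) = (q - 1 + sr p q (q - 1 - j)) % q := by
    rw [sr_add, hr]
  have h2 : (sr p q (q - 1 - j) + sr p q (j + 1)) % q = 0 := by
    rw [← sr_add]
    have hqq : q - 1 - j + (j + 1) = q := by omega
    rw [hqq, sr_q]
  have hb1 := sr_lt p hq (q - 1 - j)
  have hb2 := sr_lt p hq (j + 1)
  have hsum : sr p q (q - 1 - j) + sr p q (j + 1) = 0 ∨
      sr p q (q - 1 - j) + sr p q (j + 1) = q := by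
    obtain ⟨e, he⟩ := Nat.dvd_of_mod_eq_zero h2
    have he2 : e < 2 := by
      by_contra hcon
      push_neg at hcon
      nlinarith
    interval_cases e <;> omega
  rcases hsum with hs | hs
  · have harg : q - 1 + sr p q (q - 1 - j) = q - 1 - sr p q (j + 1) := by omega
    rw [h1, harg, Nat.mod_eq_of_lt (by omega)]
  · have harg : q - 1 + sr p q (q - 1 - j) = (q - 1 - sr p q (j + 1)) + q := by omega
    rw [h1, harg, Nat.add_mod_right, Nat.mod_eq_of_lt (by omega)]

private lemma sE_rev (p : ℕ) {q kM : ℕ} (hq : 0 < q) (hr : sr p q kM = q - 1) {j : ℕ}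
    (hj : j < q) : sE p q (kM + (q - 1 - j)) = sE p q j := by
  apply sE_eq p hq
  have h1 : sr p q (kM + (q - 1 - j)) = q - 1 - sr p q (j + 1) := srL p hq hr hj
  have h2 : sr p q (kM + (q - 1 - j) + 1) = q - 1 - sr p q j := by
    rcases Nat.eq_zero_or_pos j with rfl | hj1
    · have harg : kM + (q - 1 - 0) + 1 = kM + q := by omega
      rw [harg, sr_add_q p hq, hr]
      have h0 := sr_zero p q
      omega
    · have harg : kM + (q - 1 - j) + 1 = kM + (q - 1 - (j - 1)) := by omega
      have hj1' : j - 1 < q := by omega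
      rw [harg, srL p hq hr hj1']
      have hjj : j - 1 + 1 = j := by omega
      rw [hjj]
  rw [h1, h2]
  have hb1 := sr_lt p hq j
  have hb2 := sr_lt p hq (j + 1)
  omega

/-- The lexicographically minimal cyclic shift of the Sturmian p/q period block is the
reversal of the lexicographically maximal cyclic shift. -/
theorem sturmian_min_is_reverse_of_max (p q : ℕ) (hq : 0 < q) (hpq : Nat.Coprime p q) :
    ∃ kM km : ℕ, kM < q ∧ km < q ∧
      (∀ k < q, blockLE (sturmianBlock p q k) (sturmianBlock p q kM)) ∧
      (∀ k < q, blockLE (sturmianBlock p q km) (sturmianBlock p q k)) ∧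
      sturmianBlock p q km = (sturmianBlock p q kM).reverse := by
  obtain ⟨kM, hkM, hrM⟩ := exists_sr_eq p hq hpq (show q - 1 < q by omega)
  refine ⟨kM, 0, hkM, hq, ?_, ?_, ?_⟩
  · intro k hk
    by_cases hkk : k = kM
    · exact Or.inr (by rw [hkk])
    · left
      rw [block_eq p hq, block_eq p hq]
      have h1 : sr p q k ≠ q - 1 := fun hcon =>
        hkk (sr_inj p hq hpq hk hkM (by rw [hcon, hrM]))
      have h2 := sr_lt p hq k
      exact block_lt p hq hkM (by omega)
  · intro k hk
    by_cases hk0 : k = 0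
    · exact Or.inr (by rw [hk0])
    · left
      rw [block_eq p hq, block_eq p hq]
      have h0 := sr_zero p q
      have hne : sr p q k ≠ 0 := fun hcon =>
        hk0 (sr_inj p hq hpq hk hq (by rw [hcon, h0]))
      exact block_lt p hq hk (by omega)
  · rw [block_eq p hq, block_eq p hq]
    apply List.ext_getElem
    · simp
    · intro j h1 h2
      simp only [List.length_map, List.length_range] at h1
      rw [List.getElem_reverse]
      simp only [List.getElem_map, List.getElem_range, List.length_map, List.length_range]
      rw [Nat.zero_add]
      exact (sE_rev p hq hrM h1).symm
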